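/- arXiv:0809.1260 — 2 statements merged into one kernel-verified Lean document; each statement's English description precedes it below -/
import Mathlib

section
/- Suppose X and Y are n₁×n₂ real matrices such that XᵀY = 0 and XYᵀ = 0. Then ‖X + Y‖_* = ‖X‖_* + ‖Y‖_*. -/
open Matrix

/-- The nuclear norm of a real matrix: the sum of its singular values,
i.e. the sum of the square roots of the eigenvalues of `Xᵀ * X`. -/
noncomputable def nuclearNorm {m n : Type*} [Fintype m] [Fintype n] [DecidableEq n]
    (X : Matrix m n ℝ) : ℝ :=
  ∑ i, Real.sqrt ((show (Xᵀ * X).IsHermitian by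
    rw [← Matrix.conjTranspose_eq_transpose_of_trivial]
    exact Matrix.isHermitian_conjTranspose_mul_self X).eigenvalues i)

section aux

variable {n : Type*} [Fintype n] [DecidableEq n]

/-- Square root of a positive semidefinite real matrix (formerly in Mathlib). -/
noncomputable def Matrix.PosSemidef.sqrt {A : Matrix n n ℝ} (hA : A.PosSemidef) : Matrix n n ℝ :=
  hA.1.eigenvectorUnitary.1 * diagonal (Real.sqrt ∘ hA.1.eigenvalues) *
    (star hA.1.eigenvectorUnitary : Matrix n n ℝ)

open scoped MatrixOrder in
lemma Matrix.PosSemidef.sqrt_eq_cfc {A : Matrix n n ℝ} (hA : A.PosSemidef) :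
    hA.sqrt = CFC.sqrt A := by
  rw [CFC.sqrt_eq_cfc, cfc_nnreal_eq_real _ A, hA.1.cfc_eq]
  simp only [IsHermitian.cfc, Matrix.PosSemidef.sqrt, Unitary.conjStarAlgAut_apply]
  congr 3
  ext i
  simp only [Function.comp_apply, RCLike.ofReal_real_eq_id, id_eq]
  rw [Real.coe_sqrt, Real.coe_toNNReal _ (hA.eigenvalues_nonneg i)]

open scoped MatrixOrder in
lemma Matrix.PosSemidef.posSemidef_sqrt {A : Matrix n n ℝ} (hA : A.PosSemidef) :
    hA.sqrt.PosSemidef := by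
  rw [hA.sqrt_eq_cfc]
  exact (CFC.sqrt_nonneg A).posSemidef

open scoped MatrixOrder in
lemma Matrix.PosSemidef.sqrt_mul_self {A : Matrix n n ℝ} (hA : A.PosSemidef) :
    hA.sqrt * hA.sqrt = A := by
  rw [hA.sqrt_eq_cfc]
  exact CFC.sqrt_mul_sqrt_self A hA.nonneg

open scoped MatrixOrder in
lemma Matrix.PosSemidef.eq_sqrt_of_sq_eq {A B : Matrix n n ℝ} (hB : B.PosSemidef)
    (hA : A.PosSemidef) (h : B ^ 2 = A) : B = hA.sqrt := by
  rw [hA.sqrt_eq_cfc]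
  exact ((CFC.sqrt_eq_iff A B hA.nonneg hB.nonneg).mpr (by rw [← h, sq])).symm

lemma trace_sqrt_eq {A : Matrix n n ℝ} (hA : A.PosSemidef) :
    hA.sqrt.trace = ∑ i, Real.sqrt (hA.1.eigenvalues i) := by
  rw [Matrix.PosSemidef.sqrt, Matrix.trace_mul_cycle]
  have h1 : (star hA.1.eigenvectorUnitary : Matrix n n ℝ) * hA.1.eigenvectorUnitary.1 = 1 :=
    hA.1.eigenvectorUnitary.2.1
  rw [h1, Matrix.one_mul, Matrix.trace_diagonal]
  rfl

lemma psd_transpose_mul_self {m : Type*} [Fintype m] (X : Matrix m n ℝ) :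
    (Xᵀ * X).PosSemidef := by
  rw [← Matrix.conjTranspose_eq_transpose_of_trivial]
  exact Matrix.posSemidef_conjTranspose_mul_self X

lemma nuclearNorm_eq_trace_sqrt {m : Type*} [Fintype m] (X : Matrix m n ℝ) :
    nuclearNorm X = (psd_transpose_mul_self X).sqrt.trace := by
  rw [trace_sqrt_eq]
  rfl

end aux

theorem stmt2 (n₁ n₂ : ℕ) (X Y : Matrix (Fin n₁) (Fin n₂) ℝ)
    (h1 : Xᵀ * Y = 0) (h2 : X * Yᵀ = 0) :
    nuclearNorm (X + Y) = nuclearNorm X + nuclearNorm Y := by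
  have hA := psd_transpose_mul_self X
  have hB := psd_transpose_mul_self Y
  have hS := psd_transpose_mul_self (X + Y)
  -- transposes = conjTransposes
  have hct : ∀ (M : Matrix (Fin n₁) (Fin n₂) ℝ), Mᴴ = Mᵀ :=
    fun M => Matrix.conjTranspose_eq_transpose_of_trivial M
  have hctn : ∀ (M : Matrix (Fin n₂) (Fin n₂) ℝ), Mᴴ = Mᵀ :=
    fun M => Matrix.conjTranspose_eq_transpose_of_trivial M
  -- sqrt A is symmetric etc.
  have hsA : hA.sqrt.PosSemidef := hA.posSemidef_sqrt
  have hsB : hB.sqrt.PosSemidef := hB.posSemidef_sqrt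
  -- A * B = 0
  have hAB : (Xᵀ * X) * (Yᵀ * Y) = 0 := by
    calc (Xᵀ * X) * (Yᵀ * Y) = Xᵀ * (X * Yᵀ) * Y := by simp only [Matrix.mul_assoc]
    _ = 0 := by rw [h2, Matrix.mul_zero, Matrix.zero_mul]
  -- sqrt A * sqrt B = 0
  have key : hA.sqrt * hB.sqrt = 0 := by
    have e1 : (hA.sqrtᴴ * hA.sqrt) * (Yᵀ * Y) = 0 := by
      rw [hsA.1, hA.sqrt_mul_self, hAB]
    rw [Matrix.conjTranspose_mul_self_mul_eq_zero] at e1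
    have e2 : hA.sqrt * (hB.sqrtᴴ * hB.sqrt) = 0 := by
      rw [hsB.1, hB.sqrt_mul_self, e1]
    rw [Matrix.mul_conjTranspose_mul_self_eq_zero, hsB.1] at e2
    exact e2
  have key' : hB.sqrt * hA.sqrt = 0 := by
    have := congrArg Matrix.conjTranspose key
    rwa [Matrix.conjTranspose_mul, hsA.1, hsB.1, Matrix.conjTranspose_zero] at this
  -- (X+Y)ᵀ(X+Y) = A + B
  have hsum : (X + Y)ᵀ * (X + Y) = Xᵀ * X + Yᵀ * Y := by
    have h1' : Yᵀ * X = 0 := by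
      have := congrArg Matrix.transpose h1
      rwa [Matrix.transpose_mul, Matrix.transpose_transpose, Matrix.transpose_zero] at this
    rw [Matrix.transpose_add, Matrix.add_mul, Matrix.mul_add, Matrix.mul_add, h1, h1']
    abel
  -- sqrt(A+B) = sqrt A + sqrt B
  have hsq : (hA.sqrt + hB.sqrt) ^ 2 = (X + Y)ᵀ * (X + Y) := by
    rw [hsum, pow_two, Matrix.add_mul, Matrix.mul_add, Matrix.mul_add, key, key',
      hA.sqrt_mul_self, hB.sqrt_mul_self]
    abel
  have hsqrt_add : hA.sqrt + hB.sqrt = hS.sqrt :=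
    Matrix.PosSemidef.eq_sqrt_of_sq_eq (hsA.add hsB) hS hsq
  rw [nuclearNorm_eq_trace_sqrt, nuclearNorm_eq_trace_sqrt, nuclearNorm_eq_trace_sqrt,
    ← hsqrt_add, Matrix.trace_add]
end

section
/- Let P, P′, Q, Q′ be orthogonal projection matrices on ℝ^n (each projecting onto an r-dimensional subspace) and let W be any n×n real matrix. Then ‖(I−P′) W (I−Q′)‖_* − ‖P′ W Q′‖_* ≥ ‖(I−P) W (I−Q)‖_* − ‖P W Q‖_* − 2(‖P−P′‖ + ‖Q−Q′‖)·‖W‖_*, where ‖·‖ denotes the operator norm. -/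
open Matrix

/-- The operator norm (largest singular value) of a real matrix: the maximum of
the square roots of the eigenvalues of `Xᵀ * X`. -/
noncomputable def operatorNorm {m n : Type*} [Fintype m] [Fintype n] [DecidableEq n]
    (X : Matrix m n ℝ) : ℝ :=
  ⨆ i, Real.sqrt ((show (Xᵀ * X).IsHermitian by
    rw [← Matrix.conjTranspose_eq_transpose_of_trivial]
    exact Matrix.isHermitian_conjTranspose_mul_self X).eigenvalues i)

lemma Matrix.isHermitian_transpose_mul_self {m n : Type*} [Fintype m] [Fintype n]
    (X : Matrix m n ℝ) : (Xᵀ * X).IsHermitian := by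
  rw [← Matrix.conjTranspose_eq_transpose_of_trivial]
  exact Matrix.isHermitian_conjTranspose_mul_self X

open scoped Matrix.Norms.L2Operator

namespace Stmt15Aux

variable {n : ℕ}

/-! ### Generic vector/trace helper lemmas -/

lemma dot_le (a b : Fin n → ℝ) :
    a ⬝ᵥ b ≤ Real.sqrt (∑ i, a i ^ 2) * Real.sqrt (∑ i, b i ^ 2) := by
  have h := Finset.sum_mul_sq_le_sq_mul_sq Finset.univ a b
  calc a ⬝ᵥ b ≤ |∑ i, a i * b i| := le_abs_self _
    _ = Real.sqrt ((∑ i, a i * b i) ^ 2) := (Real.sqrt_sq_eq_abs _).symm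
    _ ≤ Real.sqrt ((∑ i, a i ^ 2) * ∑ i, b i ^ 2) := Real.sqrt_le_sqrt h
    _ = _ := Real.sqrt_mul (by positivity) _

lemma dot_self_eq (a : Fin n → ℝ) : a ⬝ᵥ a = ∑ i, a i ^ 2 := by
  simp [dotProduct, sq]

lemma dot_mulVec_mulVec (M N : Matrix (Fin n) (Fin n) ℝ) (v : Fin n → ℝ) :
    (M *ᵥ v) ⬝ᵥ (N *ᵥ v) = v ⬝ᵥ ((Mᵀ * N) *ᵥ v) := by
  rw [Matrix.dotProduct_mulVec, Matrix.dotProduct_mulVec, Matrix.vecMul_mulVec]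

lemma entry_eq' (B V : Matrix (Fin n) (Fin n) ℝ) (i : Fin n) :
    (star V * B * V) i i = (fun a => V a i) ⬝ᵥ (B *ᵥ (fun a => V a i)) := by
  simp only [Matrix.mul_apply, Matrix.mulVec, dotProduct, Matrix.star_apply,
    star_trivial, Finset.sum_mul, Finset.mul_sum]
  rw [Finset.sum_comm]
  exact Finset.sum_congr rfl fun a _ => Finset.sum_congr rfl fun b _ => by ring

lemma trace_eq_sum_conj (V M : Matrix (Fin n) (Fin n) ℝ)
    (hV : V ∈ Matrix.unitaryGroup (Fin n) ℝ) :
    Matrix.trace M = ∑ i, (star V * M * V) i i := by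
  have h2 : Matrix.trace (star V * M * V) = Matrix.trace M := by
    rw [Matrix.trace_mul_cycle, (Matrix.mem_unitaryGroup_iff).mp hV, one_mul]
  rw [← h2]; rfl

lemma vnorm_mulVec_le (Y : Matrix (Fin n) (Fin n) ℝ) (v : Fin n → ℝ) :
    Real.sqrt (∑ i, (Y *ᵥ v) i ^ 2) ≤ ‖Y‖ * Real.sqrt (∑ i, v i ^ 2) := by
  have h := Y.l2_opNorm_mulVec ((WithLp.equiv 2 (Fin n → ℝ)).symm v)
  rw [EuclideanSpace.norm_eq, EuclideanSpace.norm_eq] at h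
  simpa [Real.norm_eq_abs, sq_abs] using h

lemma proj_norm_le (E : Matrix (Fin n) (Fin n) ℝ) (hs : Eᵀ = E) (hi : E * E = E) :
    ‖E‖ ≤ 1 := by
  have h := Matrix.l2_opNorm_conjTranspose_mul_self E
  rw [Matrix.conjTranspose_eq_transpose_of_trivial, hs, hi] at h
  nlinarith [norm_nonneg E]

/-! ### Spectral data of `Xᵀ * X` -/

noncomputable def Vm (X : Matrix (Fin n) (Fin n) ℝ) : Matrix (Fin n) (Fin n) ℝ :=
  (Matrix.IsHermitian.eigenvectorUnitary (Matrix.isHermitian_transpose_mul_self X) :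
    Matrix (Fin n) (Fin n) ℝ)

noncomputable def dvec (X : Matrix (Fin n) (Fin n) ℝ) : Fin n → ℝ := fun i =>
  if (Matrix.isHermitian_transpose_mul_self X).eigenvalues i = 0 then 0
  else (Real.sqrt ((Matrix.isHermitian_transpose_mul_self X).eigenvalues i))⁻¹

noncomputable def evec (X : Matrix (Fin n) (Fin n) ℝ) : Fin n → ℝ := fun i =>
  if (Matrix.isHermitian_transpose_mul_self X).eigenvalues i = 0 then 0 else 1

noncomputable def Ym (X : Matrix (Fin n) (Fin n) ℝ) : Matrix (Fin n) (Fin n) ℝ :=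
  X * Vm X * Matrix.diagonal (dvec X) * (Vm X)ᵀ

section
variable (X : Matrix (Fin n) (Fin n) ℝ)

lemma Vm_mem : Vm X ∈ Matrix.unitaryGroup (Fin n) ℝ :=
  (Matrix.IsHermitian.eigenvectorUnitary (Matrix.isHermitian_transpose_mul_self X)).2

lemma Vm_star : star (Vm X) = (Vm X)ᵀ := by
  rw [Matrix.star_eq_conjTranspose, Matrix.conjTranspose_eq_transpose_of_trivial]

lemma Vm_diag : (Vm X)ᵀ * (Xᵀ * X) * Vm X
    = Matrix.diagonal ((Matrix.isHermitian_transpose_mul_self X).eigenvalues) := by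
  have := Matrix.IsHermitian.conjStarAlgAut_star_eigenvectorUnitary
    (Matrix.isHermitian_transpose_mul_self X)
  rw [← Vm_star]
  simpa [Vm, Unitary.conjStarAlgAut_apply, RCLike.ofReal_real_eq_id] using this

lemma Vm_tmul : (Vm X)ᵀ * Vm X = 1 := by
  rw [← Vm_star]
  exact (Matrix.mem_unitaryGroup_iff').mp (Vm_mem X)

lemma Vm_mult : Vm X * (Vm X)ᵀ = 1 := by
  rw [← Vm_star]
  exact (Matrix.mem_unitaryGroup_iff).mp (Vm_mem X)

lemma eig_nonneg (i : Fin n) : 0 ≤ (Matrix.isHermitian_transpose_mul_self X).eigenvalues i := by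
  have h : (Xᵀ * X).PosSemidef := by
    have := Matrix.posSemidef_conjTranspose_mul_self X
    simpa using this
  exact h.eigenvalues_nonneg i

lemma nuclearNorm_nonneg' : 0 ≤ nuclearNorm X :=
  Finset.sum_nonneg fun _ _ => Real.sqrt_nonneg _

lemma operatorNorm_nonneg' : 0 ≤ operatorNorm X :=
  Real.iSup_nonneg fun _ => Real.sqrt_nonneg _

lemma col_sq_sum (i : Fin n) : ∑ a, (Vm X) a i ^ 2 = 1 := by
  have h := congrFun (congrFun (Vm_tmul X) i) i
  simp only [Matrix.mul_apply, Matrix.transpose_apply, Matrix.one_apply_eq] at h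
  rw [← h]
  exact Finset.sum_congr rfl fun a _ => sq (Vm X a i)

lemma Xcol_sq_sum (i : Fin n) :
    ∑ j, (X *ᵥ (fun a => Vm X a i)) j ^ 2
      = (Matrix.isHermitian_transpose_mul_self X).eigenvalues i := by
  rw [← dot_self_eq, dot_mulVec_mulVec, ← entry_eq', Vm_star, Vm_diag]
  simp [Matrix.diagonal_apply_eq]

/-- The key duality bound: `tr (Yᵀ X) ≤ ‖Y‖ ‖X‖_*`. -/
lemma trace_le (Y : Matrix (Fin n) (Fin n) ℝ) :
    Matrix.trace (Yᵀ * X) ≤ ‖Y‖ * nuclearNorm X := by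
  rw [trace_eq_sum_conj (Vm X) _ (Vm_mem X), nuclearNorm, Finset.mul_sum]
  refine Finset.sum_le_sum fun i _ => ?_
  set v : Fin n → ℝ := fun a => Vm X a i with hv
  have h1 : (star (Vm X) * (Yᵀ * X) * Vm X) i i = (Y *ᵥ v) ⬝ᵥ (X *ᵥ v) := by
    rw [entry_eq', ← dot_mulVec_mulVec]
  rw [h1]
  calc (Y *ᵥ v) ⬝ᵥ (X *ᵥ v)
      ≤ Real.sqrt (∑ j, (Y *ᵥ v) j ^ 2) * Real.sqrt (∑ j, (X *ᵥ v) j ^ 2) := dot_le _ _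
    _ ≤ (‖Y‖ * Real.sqrt (∑ j, v j ^ 2)) *
          Real.sqrt ((Matrix.isHermitian_transpose_mul_self X).eigenvalues i) := by
        rw [Xcol_sq_sum]
        exact mul_le_mul_of_nonneg_right (vnorm_mulVec_le Y v) (Real.sqrt_nonneg _)
    _ = ‖Y‖ * Real.sqrt ((Matrix.isHermitian_transpose_mul_self X).eigenvalues i) := by
        rw [hv, col_sq_sum]
        simp

/-! ### The attaining dual witness -/

lemma col_single (i : Fin n) : (Vm X)ᵀ *ᵥ (fun a => Vm X a i) = Pi.single i 1 := by
  funext a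
  have h := congrFun (congrFun (Vm_tmul X) a) i
  simp only [Matrix.mul_apply, Matrix.transpose_apply] at h
  simp only [Matrix.mulVec, dotProduct, Matrix.transpose_apply]
  rw [h, Matrix.one_apply, Pi.single_apply]

lemma Ym_mulVec_col (i : Fin n) :
    Ym X *ᵥ (fun a => Vm X a i) = dvec X i • (X *ᵥ (fun a => Vm X a i)) := by
  rw [Ym, ← Matrix.mulVec_mulVec, ← Matrix.mulVec_mulVec, ← Matrix.mulVec_mulVec,
    col_single, Matrix.diagonal_mulVec_single, mul_one]
  have h : (Vm X) *ᵥ Pi.single i (dvec X i) = dvec X i • (fun a => Vm X a i) := by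
    funext a
    simp [Matrix.mulVec_single, mul_comm]
  rw [h, Matrix.mulVec_smul]

lemma diag_congr (f g : Fin n → ℝ) (h : ∀ i, f i = g i) :
    Vm X * Matrix.diagonal f * (Vm X)ᵀ = Vm X * Matrix.diagonal g * (Vm X)ᵀ := by
  rw [show f = g from funext h]

lemma assoc5 (A B C D E : Matrix (Fin n) (Fin n) ℝ) :
    A * B * C * D * E = A * (B * C * D) * E := by noncomm_ring

lemma assoc4 (A B C D : Matrix (Fin n) (Fin n) ℝ) :
    A * B * C * D = A * (B * C) * D := by noncomm_ring

lemma Ym_tmul : (Ym X)ᵀ * Ym X = Vm X * Matrix.diagonal (evec X) * (Vm X)ᵀ := by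
  have key := Vm_diag X
  have expand : (Ym X)ᵀ * Ym X
      = Vm X * Matrix.diagonal (dvec X) * ((Vm X)ᵀ * (Xᵀ * X) * Vm X)
        * Matrix.diagonal (dvec X) * (Vm X)ᵀ := by
    simp only [Ym, Matrix.transpose_mul, Matrix.transpose_transpose, Matrix.diagonal_transpose]
    noncomm_ring
  rw [expand, key, assoc5, Matrix.diagonal_mul_diagonal, Matrix.diagonal_mul_diagonal]
  apply diag_congr
  intro i
  by_cases h : (Matrix.isHermitian_transpose_mul_self X).eigenvalues i = 0
  · simp [dvec, evec, h]
  · have hpos : 0 < (Matrix.isHermitian_transpose_mul_self X).eigenvalues i :=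
      lt_of_le_of_ne (eig_nonneg X i) (Ne.symm h)
    have hs : Real.sqrt ((Matrix.isHermitian_transpose_mul_self X).eigenvalues i) ≠ 0 :=
      ne_of_gt (Real.sqrt_pos.mpr hpos)
    simp only [dvec, evec, h, if_false]
    rw [← Real.mul_self_sqrt (eig_nonneg X i)]
    field_simp
    rw [Real.sqrt_sq (Real.sqrt_nonneg _)]

lemma Em_symm : (Vm X * Matrix.diagonal (evec X) * (Vm X)ᵀ)ᵀ
    = Vm X * Matrix.diagonal (evec X) * (Vm X)ᵀ := by
  simp [Matrix.transpose_mul, Matrix.diagonal_transpose, Matrix.mul_assoc]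

lemma Em_idem : (Vm X * Matrix.diagonal (evec X) * (Vm X)ᵀ) *
    (Vm X * Matrix.diagonal (evec X) * (Vm X)ᵀ)
    = Vm X * Matrix.diagonal (evec X) * (Vm X)ᵀ := by
  have expand : (Vm X * Matrix.diagonal (evec X) * (Vm X)ᵀ) *
      (Vm X * Matrix.diagonal (evec X) * (Vm X)ᵀ)
      = Vm X * Matrix.diagonal (evec X) * ((Vm X)ᵀ * Vm X) * Matrix.diagonal (evec X)
        * (Vm X)ᵀ := by noncomm_ring
  rw [expand, Vm_tmul, Matrix.mul_one, assoc4, Matrix.diagonal_mul_diagonal]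
  apply diag_congr
  intro i
  by_cases h : (Matrix.isHermitian_transpose_mul_self X).eigenvalues i = 0 <;> simp [evec, h]

lemma Ym_norm_le : ‖Ym X‖ ≤ 1 := by
  have h := Matrix.l2_opNorm_conjTranspose_mul_self (Ym X)
  rw [Matrix.conjTranspose_eq_transpose_of_trivial, Ym_tmul] at h
  have hE : ‖Vm X * Matrix.diagonal (evec X) * (Vm X)ᵀ‖ ≤ 1 :=
    proj_norm_le _ (Em_symm X) (Em_idem X)
  nlinarith [norm_nonneg (Ym X)]

lemma Ym_trace : Matrix.trace ((Ym X)ᵀ * X) = nuclearNorm X := by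
  rw [trace_eq_sum_conj (Vm X) _ (Vm_mem X), nuclearNorm]
  refine Finset.sum_congr rfl fun i _ => ?_
  set v : Fin n → ℝ := fun a => Vm X a i with hv
  have h1 : (star (Vm X) * ((Ym X)ᵀ * X) * Vm X) i i = (Ym X *ᵥ v) ⬝ᵥ (X *ᵥ v) := by
    rw [entry_eq', ← dot_mulVec_mulVec]
  rw [h1, Ym_mulVec_col, smul_dotProduct, smul_eq_mul, dot_self_eq, Xcol_sq_sum]
  by_cases h : (Matrix.isHermitian_transpose_mul_self X).eigenvalues i = 0
  · simp [dvec, h]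
  · have hpos : 0 < (Matrix.isHermitian_transpose_mul_self X).eigenvalues i :=
      lt_of_le_of_ne (eig_nonneg X i) (Ne.symm h)
    have hs : 0 < Real.sqrt ((Matrix.isHermitian_transpose_mul_self X).eigenvalues i) :=
      Real.sqrt_pos.mpr hpos
    simp only [dvec, h, if_false]
    rw [← Real.mul_self_sqrt (eig_nonneg X i)]
    field_simp
    rw [Real.sqrt_sq (Real.sqrt_nonneg _)]

lemma attain : ∃ Y : Matrix (Fin n) (Fin n) ℝ,
    ‖Y‖ ≤ 1 ∧ Matrix.trace (Yᵀ * X) = nuclearNorm X :=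
  ⟨Ym X, Ym_norm_le X, Ym_trace X⟩

end

/-! ### Norm properties of the nuclear norm -/

lemma nn_add_le (A B : Matrix (Fin n) (Fin n) ℝ) :
    nuclearNorm (A + B) ≤ nuclearNorm A + nuclearNorm B := by
  obtain ⟨Y, hY1, hY2⟩ := attain (A + B)
  rw [← hY2, Matrix.mul_add, Matrix.trace_add]
  have hA : Matrix.trace (Yᵀ * A) ≤ nuclearNorm A :=
    le_trans (trace_le A Y)
      (by nlinarith [nuclearNorm_nonneg' A, norm_nonneg Y])
  have hB : Matrix.trace (Yᵀ * B) ≤ nuclearNorm B :=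
    le_trans (trace_le B Y)
      (by nlinarith [nuclearNorm_nonneg' B, norm_nonneg Y])
  linarith

lemma nn_rev (A B : Matrix (Fin n) (Fin n) ℝ) :
    nuclearNorm A ≤ nuclearNorm B + nuclearNorm (A - B) := by
  have := nn_add_le B (A - B)
  simpa using this

lemma nn_mul3_le (A B X : Matrix (Fin n) (Fin n) ℝ) :
    nuclearNorm (A * X * B) ≤ ‖A‖ * ‖B‖ * nuclearNorm X := by
  obtain ⟨Y, hY1, hY2⟩ := attain (A * X * B)
  rw [← hY2]
  have htr : Matrix.trace (Yᵀ * (A * X * B)) = Matrix.trace ((Aᵀ * Y * Bᵀ)ᵀ * X) := by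
    have h1 : (Aᵀ * Y * Bᵀ)ᵀ = B * Yᵀ * A := by
      simp [Matrix.transpose_mul, Matrix.transpose_transpose, Matrix.mul_assoc]
    rw [h1]
    rw [show Yᵀ * (A * X * B) = (Yᵀ * A * X) * B by noncomm_ring,
      Matrix.trace_mul_comm,
      show B * (Yᵀ * A * X) = (B * Yᵀ * A) * X by noncomm_ring]
  rw [htr]
  refine le_trans (trace_le X (Aᵀ * Y * Bᵀ)) ?_
  have hnorm : ‖Aᵀ * Y * Bᵀ‖ ≤ ‖A‖ * ‖B‖ := by
    have h1 : ‖Aᵀ * Y * Bᵀ‖ ≤ ‖Aᵀ * Y‖ * ‖Bᵀ‖ := Matrix.l2_opNorm_mul _ _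
    have h2 : ‖Aᵀ * Y‖ ≤ ‖Aᵀ‖ * ‖Y‖ := Matrix.l2_opNorm_mul _ _
    have h3 : ‖Aᵀ‖ = ‖A‖ := by
      rw [← Matrix.conjTranspose_eq_transpose_of_trivial, Matrix.l2_opNorm_conjTranspose]
    have h4 : ‖Bᵀ‖ = ‖B‖ := by
      rw [← Matrix.conjTranspose_eq_transpose_of_trivial, Matrix.l2_opNorm_conjTranspose]
    rw [h3] at h2
    rw [h4] at h1
    calc ‖Aᵀ * Y * Bᵀ‖ ≤ ‖Aᵀ * Y‖ * ‖B‖ := h1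
      _ ≤ (‖A‖ * ‖Y‖) * ‖B‖ := mul_le_mul_of_nonneg_right h2 (norm_nonneg B)
      _ ≤ (‖A‖ * 1) * ‖B‖ := by
          have hh : ‖A‖ * ‖Y‖ ≤ ‖A‖ * 1 := mul_le_mul_of_nonneg_left hY1 (norm_nonneg A)
          exact mul_le_mul_of_nonneg_right hh (norm_nonneg B)
      _ = ‖A‖ * ‖B‖ := by ring
  exact mul_le_mul_of_nonneg_right hnorm (nuclearNorm_nonneg' X)

/-! ### Operator norm comparison -/

lemma opnorm_le (X : Matrix (Fin n) (Fin n) ℝ) : ‖X‖ ≤ operatorNorm X := by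
  set c := operatorNorm X with hc
  have hc0 : 0 ≤ c := operatorNorm_nonneg' X
  rw [Matrix.l2_opNorm_def]
  refine ContinuousLinearMap.opNorm_le_bound _ hc0 fun x => ?_
  have happ : (LinearEquiv.trans Matrix.toEuclideanLin
      LinearMap.toContinuousLinearMap X) x = Matrix.toEuclideanLin X x := rfl
  rw [happ, Matrix.toEuclideanLin_apply]
  set v : Fin n → ℝ := WithLp.equiv 2 (Fin n → ℝ) x with hv
  have hxnorm : ‖x‖ = Real.sqrt (∑ i, v i ^ 2) := by
    rw [EuclideanSpace.norm_eq]
    simp [Real.norm_eq_abs, sq_abs, hv]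
  have hmnorm : ‖(WithLp.equiv 2 (Fin n → ℝ)).symm (X *ᵥ v)‖
      = Real.sqrt (∑ i, (X *ᵥ v) i ^ 2) := by
    rw [EuclideanSpace.norm_eq]
    simp [Real.norm_eq_abs, sq_abs]
  change ‖(WithLp.equiv 2 (Fin n → ℝ)).symm (X *ᵥ v)‖ ≤ c * ‖x‖
  rw [hmnorm, hxnorm]
  set lam := (Matrix.isHermitian_transpose_mul_self X).eigenvalues with hlam
  obtain ⟨w, hw⟩ : ∃ w : Fin n → ℝ, w = (Vm X)ᵀ *ᵥ v := ⟨_, rfl⟩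
  have hvw : v = Vm X *ᵥ w := by
    rw [hw, Matrix.mulVec_mulVec, Vm_mult, Matrix.one_mulVec]
  have hsum : ∑ i, (X *ᵥ v) i ^ 2 = ∑ i, lam i * w i ^ 2 := by
    rw [← dot_self_eq, dot_mulVec_mulVec]
    rw [hvw]
    have : (Vm X *ᵥ w) ⬝ᵥ ((Xᵀ * X) *ᵥ (Vm X *ᵥ w))
        = (Vm X *ᵥ w) ⬝ᵥ (((Xᵀ * X) * Vm X) *ᵥ w) := by
      rw [Matrix.mulVec_mulVec]
    rw [this, dot_mulVec_mulVec]
    rw [← Matrix.mul_assoc, Vm_diag]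
    simp only [Matrix.mulVec_diagonal, dotProduct]
    exact Finset.sum_congr rfl fun i _ => by ring
  have hsum2 : ∑ i, w i ^ 2 = ∑ i, v i ^ 2 := by
    rw [← dot_self_eq, ← dot_self_eq, hw, dot_mulVec_mulVec, Matrix.transpose_transpose,
      Vm_mult, Matrix.one_mulVec]
  have hlambd : ∀ i, lam i ≤ c ^ 2 := by
    intro i
    have h1 : Real.sqrt (lam i) ≤ c := by
      rw [hc]
      show Real.sqrt (lam i)
        ≤ ⨆ j, Real.sqrt ((Matrix.isHermitian_transpose_mul_self X).eigenvalues j)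
      exact le_ciSup (Set.Finite.bddAbove (Set.finite_range
        (fun j => Real.sqrt ((Matrix.isHermitian_transpose_mul_self X).eigenvalues j)))) i
    have := Real.sq_sqrt (eig_nonneg X i)
    nlinarith [Real.sqrt_nonneg (lam i)]
  calc Real.sqrt (∑ i, (X *ᵥ v) i ^ 2) = Real.sqrt (∑ i, lam i * w i ^ 2) := by rw [hsum]
    _ ≤ Real.sqrt (∑ i, c ^ 2 * w i ^ 2) := by
        apply Real.sqrt_le_sqrt
        exact Finset.sum_le_sum fun i _ => mul_le_mul_of_nonneg_right (hlambd i) (sq_nonneg _)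
    _ = Real.sqrt (c ^ 2 * ∑ i, w i ^ 2) := by rw [Finset.mul_sum]
    _ = c * Real.sqrt (∑ i, v i ^ 2) := by
        rw [hsum2, Real.sqrt_mul (sq_nonneg c), Real.sqrt_sq hc0]

/-- Orthogonal projections (and their complements) have operator norm at most 1. -/
lemma proj_one_norm_le (Q : Matrix (Fin n) (Fin n) ℝ) (hs : Qᵀ = Q) (hi : Q * Q = Q) :
    ‖(1 : Matrix (Fin n) (Fin n) ℝ) - Q‖ ≤ 1 := by
  refine proj_norm_le _ ?_ ?_
  · rw [Matrix.transpose_sub, Matrix.transpose_one, hs]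
  · have h : ((1 : Matrix (Fin n) (Fin n) ℝ) - Q) * (1 - Q) = 1 - Q - Q + Q * Q := by
      noncomm_ring
    rw [h, hi]
    noncomm_ring

end Stmt15Aux

open Stmt15Aux in
/-- For rank-`r` orthogonal projections `P, P′, Q, Q′` on `ℝⁿ` and any `W`:
`‖(I−P′)W(I−Q′)‖_* − ‖P′WQ′‖_* ≥ ‖(I−P)W(I−Q)‖_* − ‖PWQ‖_*
  − 2(‖P−P′‖ + ‖Q−Q′‖)‖W‖_*`. -/
theorem stmt15 (n r : ℕ)
    (P P' Q Q' : Matrix (Fin n) (Fin n) ℝ)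
    (hPSymm : Pᵀ = P) (hPIdem : P * P = P) (hPrank : P.rank = r)
    (hP'Symm : P'ᵀ = P') (hP'Idem : P' * P' = P') (hP'rank : P'.rank = r)
    (hQSymm : Qᵀ = Q) (hQIdem : Q * Q = Q) (hQrank : Q.rank = r)
    (hQ'Symm : Q'ᵀ = Q') (hQ'Idem : Q' * Q' = Q') (hQ'rank : Q'.rank = r)
    (W : Matrix (Fin n) (Fin n) ℝ) :
    nuclearNorm ((1 - P') * W * (1 - Q')) - nuclearNorm (P' * W * Q') ≥
      nuclearNorm ((1 - P) * W * (1 - Q)) - nuclearNorm (P * W * Q) -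
        2 * (operatorNorm (P - P') + operatorNorm (Q - Q')) * nuclearNorm W := by
  set a := ‖P - P'‖ with hadef
  set b := ‖Q - Q'‖ with hbdef
  have hW0 : (0 : ℝ) ≤ nuclearNorm W := nuclearNorm_nonneg' W
  have ha0 : (0 : ℝ) ≤ a := norm_nonneg _
  have hb0 : (0 : ℝ) ≤ b := norm_nonneg _
  have haop : a ≤ operatorNorm (P - P') := opnorm_le _
  have hbop : b ≤ operatorNorm (Q - Q') := opnorm_le _
  -- projection norm bounds
  have hP1 : ‖(1 : Matrix (Fin n) (Fin n) ℝ) - P'‖ ≤ 1 := proj_one_norm_le P' hP'Symm hP'Idem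
  have hQ1 : ‖(1 : Matrix (Fin n) (Fin n) ℝ) - Q‖ ≤ 1 := proj_one_norm_le Q hQSymm hQIdem
  have hPn : ‖P‖ ≤ 1 := proj_norm_le P hPSymm hPIdem
  have hQ'n : ‖Q'‖ ≤ 1 := proj_norm_le Q' hQ'Symm hQ'Idem
  -- norm of differences
  have haneg : ‖P' - P‖ = a := by rw [hadef, ← norm_neg]; congr 1; abel
  have hbneg : ‖Q' - Q‖ = b := by rw [hbdef, ← norm_neg]; congr 1; abel
  -- first perturbation bound
  have key1 : nuclearNorm ((1 - P) * W * (1 - Q)) ≤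
      nuclearNorm ((1 - P') * W * (1 - Q')) + (a + b) * nuclearNorm W := by
    have hdec : (1 - P) * W * (1 - Q) - (1 - P') * W * (1 - Q')
        = (P' - P) * W * (1 - Q) + (1 - P') * W * (Q' - Q) := by noncomm_ring
    have h1 : nuclearNorm ((P' - P) * W * (1 - Q)) ≤ a * nuclearNorm W := by
      refine le_trans (nn_mul3_le _ _ _) ?_
      rw [haneg]
      have hh : a * ‖(1 : Matrix (Fin n) (Fin n) ℝ) - Q‖ ≤ a * 1 :=
        mul_le_mul_of_nonneg_left hQ1 ha0
      calc a * ‖(1 : Matrix (Fin n) (Fin n) ℝ) - Q‖ * nuclearNorm W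
          ≤ (a * 1) * nuclearNorm W := mul_le_mul_of_nonneg_right hh hW0
        _ = a * nuclearNorm W := by ring
    have h2 : nuclearNorm ((1 - P') * W * (Q' - Q)) ≤ b * nuclearNorm W := by
      refine le_trans (nn_mul3_le _ _ _) ?_
      rw [hbneg]
      have hh : ‖(1 : Matrix (Fin n) (Fin n) ℝ) - P'‖ * b ≤ 1 * b :=
        mul_le_mul_of_nonneg_right hP1 hb0
      calc ‖(1 : Matrix (Fin n) (Fin n) ℝ) - P'‖ * b * nuclearNorm W
          ≤ (1 * b) * nuclearNorm W := mul_le_mul_of_nonneg_right hh hW0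
        _ = b * nuclearNorm W := by ring
    have h3 := nn_rev ((1 - P) * W * (1 - Q)) ((1 - P') * W * (1 - Q'))
    rw [hdec] at h3
    have h4 := nn_add_le ((P' - P) * W * (1 - Q)) ((1 - P') * W * (Q' - Q))
    linarith
  -- second perturbation bound
  have key2 : nuclearNorm (P' * W * Q') ≤
      nuclearNorm (P * W * Q) + (a + b) * nuclearNorm W := by
    have hdec : P' * W * Q' - P * W * Q
        = (P' - P) * W * Q' + P * W * (Q' - Q) := by noncomm_ring
    have h1 : nuclearNorm ((P' - P) * W * Q') ≤ a * nuclearNorm W := by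
      refine le_trans (nn_mul3_le _ _ _) ?_
      rw [haneg]
      have hh : a * ‖Q'‖ ≤ a * 1 := mul_le_mul_of_nonneg_left hQ'n ha0
      calc a * ‖Q'‖ * nuclearNorm W
          ≤ (a * 1) * nuclearNorm W := mul_le_mul_of_nonneg_right hh hW0
        _ = a * nuclearNorm W := by ring
    have h2 : nuclearNorm (P * W * (Q' - Q)) ≤ b * nuclearNorm W := by
      refine le_trans (nn_mul3_le _ _ _) ?_
      rw [hbneg]
      have hh : ‖P‖ * b ≤ 1 * b := mul_le_mul_of_nonneg_right hPn hb0
      calc ‖P‖ * b * nuclearNorm W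
          ≤ (1 * b) * nuclearNorm W := mul_le_mul_of_nonneg_right hh hW0
        _ = b * nuclearNorm W := by ring
    have h3 := nn_rev (P' * W * Q') (P * W * Q)
    rw [hdec] at h3
    have h4 := nn_add_le ((P' - P) * W * Q') (P * W * (Q' - Q))
    linarith
  have hmono : (a + b) * nuclearNorm W
      ≤ (operatorNorm (P - P') + operatorNorm (Q - Q')) * nuclearNorm W :=
    mul_le_mul_of_nonneg_right (add_le_add haop hbop) hW0
  linarith
end
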